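/- Let t > 0 be real, set z := t·√(1 + t/2), m² := 1/(2z), u₁ := −m²·(2t + (3/4)t²), g₂(u) := (4/3)u² − 1, g₃(u) := z/8 − u/3 + (8/27)u³, and D(u) := g₂(u)³ − 27g₃(u)². Then the u-derivative of the discriminant satisfies D′(u₁) = −2t(1 + 3t/4)³/z. Consequently, with 𝚖 := 1728·g₂(u₁)³/D′(u₁) and 𝚡 := √(z/(4t(1 + 3t/4))) (the positive square root), one has −4·𝚖·𝚡⁷ = (1 + t/2)^{−3/4}·(1 + 3t/4)^{−1/2}. -/

import Mathlib

/-- equal-mass `N_f = 1` gravitational coupling. For `t > 0`,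
with `z = t√(1 + t/2)`, `m² = 1/(2z)`, `u₁ = −m²(2t + (3/4)t²)`,
`g₂(u) = (4/3)u² − 1`, `g₃(u) = z/8 − u/3 + (8/27)u³` and
`D = g₂³ − 27g₃²`, one has `D′(u₁) = −2t(1 + 3t/4)³/z`; consequently, with
`mCoef = 1728 g₂(u₁)³/D′(u₁)` and `xPer = √(z/(4t(1 + 3t/4)))`,
`−4mCoefxPer⁷ = (1 + t/2)^{−3/4}(1 + 3t/4)^{−1/2}`. -/
theorem stmt_7 (t z m2 u1 : ℝ) (ht : 0 < t)
    (hz : z = t * Real.sqrt (1 + t/2))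
    (hm2 : m2 = 1/(2*z))
    (hu1 : u1 = -m2 * (2*t + (3/4)*t^2))
    (g2 g3 D : ℝ → ℝ)
    (hg2 : ∀ u, g2 u = (4/3)*u^2 - 1)
    (hg3 : ∀ u, g3 u = z/8 - u/3 + (8/27)*u^3)
    (hD : ∀ u, D u = g2 u ^ 3 - 27 * g3 u ^ 2)
    (mCoef xPer : ℝ)
    (hmCoef : mCoef = 1728 * g2 u1 ^ 3 / deriv D u1)
    (hxPer : xPer = Real.sqrt (z/(4*t*(1 + 3*t/4)))) :
    deriv D u1 = -2*t*(1 + 3*t/4)^3/z ∧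
    -4 * mCoef * xPer^7 = (1 + t/2) ^ (-(3:ℝ)/4) * (1 + 3*t/4) ^ (-(1:ℝ)/2) := by
  set s := Real.sqrt (1 + t/2) with hs
  have h12 : (0:ℝ) < 1 + t/2 := by linarith
  have hsp : 0 < s := Real.sqrt_pos.mpr h12
  have hs2 : s^2 = 1 + t/2 := Real.sq_sqrt h12.le
  have hw : (0:ℝ) < 1 + 3*t/4 := by linarith
  have hzp : 0 < z := by rw [hz]; positivity
  have hu1' : u1 = -(2 + 3*t/4)/(2*s) := by
    rw [hu1, hm2, hz]
    field_simp
  -- derivative of D at u1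
  have hDfun : D = fun u => ((4/3)*u^2-1)^3 - 27*(z/8 - u/3 + (8/27)*u^3)^2 :=
    funext fun u => by rw [hD, hg2, hg3]
  have h1 : HasDerivAt (fun u:ℝ => (4/3)*u^2 - 1) ((4/3)*(2*u1)) u1 := by
    have := ((hasDerivAt_pow 2 u1).const_mul ((4:ℝ)/3)).sub_const 1
    simpa using this
  have h2 := h1.pow 3
  have h3 : HasDerivAt (fun u:ℝ => z/8 - u/3 + (8/27)*u^3)
      (-(1/3) + (8/27)*(3*u1^2)) u1 := by
    have ha : HasDerivAt (fun u:ℝ => z/8 - u/3) (-(1/3)) u1 := by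
      simpa using ((hasDerivAt_id u1).div_const 3).const_sub (z/8)
    have hb := (hasDerivAt_pow 3 u1).const_mul ((8:ℝ)/27)
    exact (ha.add hb).congr_deriv (by ring)
  have h4 := (h3.pow 2).const_mul (27:ℝ)
  have hder : HasDerivAt D
      (3 * ((4/3)*u1^2-1)^(3-1) * ((4/3)*(2*u1))
        - 27 * (2 * (z/8 - u1/3 + (8/27)*u1^3)^(2-1) * (-(1/3) + (8/27)*(3*u1^2)))) u1 := by
    rw [hDfun]
    exact h2.sub h4
  have hderval : deriv D u1 = -2*t*(1 + 3*t/4)^3/z := by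
    rw [hder.deriv, hu1', hz]
    simp only [Nat.reduceSub, pow_one]
    field_simp
    ring_nf
    linear_combination (71663616:ℝ) * t * s^4 * hs2
  refine ⟨hderval, ?_⟩
  have hg2v : g2 u1 = (1 + 3*t/4)^2/(3*s^2) := by
    rw [hg2, hu1']
    field_simp
    ring_nf
    linear_combination (-192:ℝ) * hs2
  have hg3v : g3 u1 = (1 + 3*t/4)^3/(27*s^3) := by
    rw [hg3, hu1', hz]
    field_simp
    ring_nf
    linear_combination ((110592:ℝ) + 82944*t + 20736*t^2 + 41472*t*s^2) * hs2
  have hmv : mCoef = -32*(1 + 3*t/4)^3/s^5 := by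
    rw [hmCoef, hderval, hg2v, hz]
    field_simp
    ring
  have hxv : xPer = Real.sqrt s / (2 * Real.sqrt (1 + 3*t/4)) := by
    rw [hxPer]
    have harg : z/(4*t*(1 + 3*t/4)) = s/(4*(1 + 3*t/4)) := by
      rw [hz]; field_simp
    rw [harg, Real.sqrt_div hsp.le, Real.sqrt_mul (by norm_num : (0:ℝ) ≤ 4),
      show Real.sqrt 4 = 2 by
        rw [show (4:ℝ) = 2^2 by norm_num, Real.sqrt_sq (by norm_num : (0:ℝ) ≤ 2)]]
  set σ := Real.sqrt s with hσdef
  set ω := Real.sqrt (1 + 3*t/4) with hωdef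
  have hσp : 0 < σ := Real.sqrt_pos.mpr hsp
  have hωp : 0 < ω := Real.sqrt_pos.mpr hw
  have hσ2 : σ^2 = s := Real.sq_sqrt hsp.le
  have hω2 : ω^2 = 1 + 3*t/4 := Real.sq_sqrt hw.le
  have h1 : (1 + t/2) ^ (-(3:ℝ)/4) = (σ^3)⁻¹ := by
    rw [show (1 + t/2) = σ^4 by rw [show σ^4 = (σ^2)^2 by ring, hσ2]; exact hs2.symm,
      ← Real.rpow_natCast σ 4, ← Real.rpow_mul (Real.sqrt_nonneg s),
      show ((4:ℕ):ℝ) * (-(3:ℝ)/4) = -(3:ℝ) by norm_num,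
      Real.rpow_neg (Real.sqrt_nonneg s),
      show (3:ℝ) = ((3:ℕ):ℝ) by norm_num, Real.rpow_natCast]
  have h2 : (1 + 3*t/4) ^ (-(1:ℝ)/2) = ω⁻¹ := by
    rw [show (1 + 3*t/4) = ω^2 from hω2.symm,
      ← Real.rpow_natCast ω 2, ← Real.rpow_mul (Real.sqrt_nonneg _),
      show ((2:ℕ):ℝ) * (-(1:ℝ)/2) = -(1:ℝ) by norm_num,
      Real.rpow_neg (Real.sqrt_nonneg _), Real.rpow_one]
  rw [hmv, hxv, h1, h2, ← hσ2, ← hω2]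
  field_simp
  ring
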